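/- Let a < b be real numbers and let α, β > 0 with α + β = 1. If h : [a,b] → ℝ is Lebesgue measurable and satisfies h(αx + βy) ≤ 1 + αh(x) + βh(y) for all x, y ∈ [a,b], then h is bounded above on [a,b]. -/

import Mathlib

set_option maxHeartbeats 1000000 in
theorem stmt2 (a b : ℝ) (hab : a < b) (α β : ℝ) (hα : 0 < α) (hβ : 0 < β)
    (hαβ : α + β = 1) (h : ℝ → ℝ)
    (hmeas : MeasureTheory.NullMeasurable h
      (MeasureTheory.volume.restrict (Set.Icc a b)))
    (hac : ∀ x ∈ Set.Icc a b, ∀ y ∈ Set.Icc a b,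
      h (α * x + β * y) ≤ 1 + α * h x + β * h y) :
    ∃ M : ℝ, ∀ x ∈ Set.Icc a b, h x ≤ M := by
  classical
  open MeasureTheory Set Filter in
  have hα1 : α < 1 := by linarith
  have hβ1 : β < 1 := by linarith
  have hba : (0:ℝ) < b - a := by linarith
  set μ' : Measure ℝ := volume.restrict (Set.Icc a b) with hμ'
  -- Step 1 : find C with small bad set
  set δr : ℝ := α * β * (b - a) / 4 with hδr
  have hδrpos : 0 < δr := by positivity
  have hae : AEMeasurable h μ' := (hmeas.aemeasurable)
  set g : ℝ → ℝ := hae.mk h with hg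
  have hgm : Measurable g := hae.measurable_mk
  have hgeq : ∀ᵐ x ∂μ', h x = g x := hae.ae_eq_mk
  obtain ⟨C, hC⟩ : ∃ C : ℝ, μ' {x | C < h x} < ENNReal.ofReal δr := by
    set B : ℕ → Set ℝ := fun n => {x | (n : ℝ) < g x} with hB
    have hBm : ∀ n, NullMeasurableSet (B n) μ' :=
      fun n => (hgm measurableSet_Ioi).nullMeasurableSet
    have hBa : Antitone B := by
      intro n m hnm x hx
      simp only [B, Set.mem_setOf_eq] at hx ⊢
      exact lt_of_le_of_lt (by exact_mod_cast Nat.cast_le.2 hnm) hx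
    have hfin : ∃ n, μ' (B n) ≠ ⊤ := by
      refine ⟨0, ?_⟩
      have : μ' (B 0) ≤ μ' Set.univ := measure_mono (Set.subset_univ _)
      have h2 : μ' Set.univ = ENNReal.ofReal (b - a) := by
        rw [hμ', Measure.restrict_apply_univ, Real.volume_Icc]
      exact ne_top_of_le_ne_top (by rw [h2]; exact ENNReal.ofReal_ne_top) this
    have hInter : ⋂ n, B n = ∅ := by
      ext x
      simp only [Set.mem_iInter, Set.mem_setOf_eq, Set.mem_empty_iff_false, iff_false, not_forall,
        not_lt, B]
      obtain ⟨n, hn⟩ := exists_nat_ge (g x)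
      exact ⟨n, hn⟩
    have htend := tendsto_measure_iInter_atTop hBm hBa hfin
    rw [hInter, measure_empty] at htend
    obtain ⟨n, hn⟩ : ∃ n, μ' (B n) < ENNReal.ofReal δr := by
      have := htend.eventually_lt_const (by positivity : (0:ENNReal) < ENNReal.ofReal δr)
      exact this.exists
    refine ⟨n, lt_of_le_of_lt ?_ hn⟩
    have hsub : {x | (n:ℝ) < h x} ⊆ B n ∪ {x | h x ≠ g x} := by
      intro x hx
      by_cases hxg : h x = g x
      · left; simp only [B, Set.mem_setOf_eq]; rw [← hxg]; exact hx
      · right; exact hxg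
    calc μ' {x | (n:ℝ) < h x} ≤ μ' (B n ∪ {x | h x ≠ g x}) := measure_mono hsub
      _ ≤ μ' (B n) + μ' {x | h x ≠ g x} := measure_union_le _ _
      _ = μ' (B n) := by
          rw [(by exact ae_iff.1 hgeq : μ' {x | h x ≠ g x} = 0), add_zero]
  -- bad set in terms of volume
  set E : Set ℝ := {x ∈ Set.Icc a b | h x ≤ C} with hE
  have hbad : volume (Set.Icc a b \ E) < ENNReal.ofReal δr := by
    have heq : Set.Icc a b \ E = {x | C < h x} ∩ Set.Icc a b := by
      ext x
      simp only [hE, Set.mem_diff, Set.mem_setOf_eq, Set.mem_inter_iff, Set.mem_sep_iff, not_and,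
        not_le]
      constructor
      · rintro ⟨hx1, hx2⟩; exact ⟨hx2 hx1, hx1⟩
      · rintro ⟨hx1, hx2⟩; exact ⟨hx2, fun _ => hx1⟩
    rw [heq, ← Measure.restrict_apply' measurableSet_Icc]
    exact hC
  -- constants for the middle interval
  set c : ℝ := a + β * (b - a) / 2 with hc
  set d : ℝ := b - β * (b - a) / 2 with hd
  have hβba : 0 < β * (b - a) := mul_pos hβ hba
  have hβba1 : β * (b - a) ≤ b - a := by nlinarith [mul_pos (sub_pos.2 hβ1) hba]
  have hcd : c ≤ d := by rw [hc, hd]; linarith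
  have hac' : a < c := by rw [hc]; linarith
  have hdb : d < b := by rw [hd]; linarith
  have ea : α * a + β * a = a := by rw [← add_mul, hαβ, one_mul]
  have eb : α * b + β * b = b := by rw [← add_mul, hαβ, one_mul]
  -- Step 2 : bound on the middle interval
  have key : ∀ t ∈ Set.Icc c d, h t ≤ 1 + C := by
    rintro t ⟨htc, htd⟩
    rw [hc] at htc
    rw [hd] at htd
    have hprod : (0:ℝ) ≤ β * (b - a) * (1 - α) :=
      mul_nonneg hβba.le (by linarith)
    set u : ℝ := max a ((t - β * b) / α) with hu
    set v : ℝ := min b ((t - β * a) / α) with hv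
    have hXa : a + β * (b - a) / 2 ≤ (t - β * a) / α := by
      rw [le_div_iff₀ hα]; nlinarith [htc, hprod, ea]
    have hbY : (t - β * b) / α ≤ b - β * (b - a) / 2 := by
      rw [div_le_iff₀ hα]; nlinarith [htd, hprod, eb]
    have hXY : β * (b - a) / 2 ≤ (t - β * a) / α - (t - β * b) / α := by
      rw [div_sub_div_same, le_div_iff₀ hα]; nlinarith
    have hvu : β * (b - a) / 2 ≤ v - u := by
      rw [hu, hv]
      rcases le_total b ((t - β * a) / α) with h1 | h1 <;>
        rcases le_total a ((t - β * b) / α) with h2 | h2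
      · rw [min_eq_left h1, max_eq_right h2]; linarith
      · rw [min_eq_left h1, max_eq_left h2]; linarith
      · rw [min_eq_right h1, max_eq_right h2]; linarith
      · rw [min_eq_right h1, max_eq_left h2]; linarith
    have huv : u ≤ v := by linarith
    have hsub : Set.Icc u v ⊆ Set.Icc a b := by
      intro x hx
      exact ⟨le_trans (le_max_left _ _) hx.1, le_trans hx.2 (min_le_left _ _)⟩
    have hymem : ∀ x ∈ Set.Icc u v, (t - α * x) / β ∈ Set.Icc a b := by
      rintro x ⟨hx1, hx2⟩
      have h1 : (t - β * b) / α ≤ x := le_trans (le_max_right _ _) hx1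
      have h2 : x ≤ (t - β * a) / α := le_trans hx2 (min_le_right _ _)
      rw [div_le_iff₀ hα] at h1
      rw [le_div_iff₀ hα] at h2
      constructor
      · rw [le_div_iff₀ hβ]; nlinarith
      · rw [div_le_iff₀ hβ]; nlinarith
    set φ : ℝ → ℝ := fun x => (t - α * x) / β with hφ
    set A : Set ℝ := Set.Icc u v \ E with hA
    set B' : Set ℝ := {x ∈ Set.Icc u v | φ x ∉ E} with hB'
    have hvolA : volume A ≤ ENNReal.ofReal δr := by
      refine le_of_lt (lt_of_le_of_lt (measure_mono ?_) hbad)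
      intro x hx
      exact ⟨hsub hx.1, hx.2⟩
    have hvolB : volume B' ≤ ENNReal.ofReal (β / α * δr) := by
      set N : Set ℝ := toMeasurable volume (Set.Icc a b \ E) with hN
      have hNsub : Set.Icc a b \ E ⊆ N := subset_toMeasurable _ _
      have hNvol : volume N = volume (Set.Icc a b \ E) := measure_toMeasurable _
      have hBsub : B' ⊆ φ ⁻¹' N := by
        rintro x ⟨hx1, hx2⟩
        exact hNsub ⟨hymem x hx1, hx2⟩
      have hdecomp : φ ⁻¹' N =
          (α * ·) ⁻¹' ((Neg.neg : ℝ → ℝ) ⁻¹' ((t + ·) ⁻¹' ((· * β⁻¹) ⁻¹' N))) := by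
        ext x
        simp only [Set.mem_preimage, hφ]
        rw [div_eq_mul_inv, sub_eq_add_neg]
      have hvolφ : volume (φ ⁻¹' N) = ENNReal.ofReal (β / α) * volume N := by
        rw [hdecomp, Real.volume_preimage_mul_left hα.ne', Measure.measure_preimage_neg,
          measure_preimage_add,
          Real.volume_preimage_mul_right (inv_ne_zero hβ.ne'), inv_inv,
          abs_of_pos (inv_pos.2 hα), abs_of_pos hβ, ← mul_assoc,
          ← ENNReal.ofReal_mul (le_of_lt (inv_pos.2 hα))]
        congr 2
        rw [div_eq_mul_inv, mul_comm]
      calc volume B' ≤ volume (φ ⁻¹' N) := measure_mono hBsub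
        _ = ENNReal.ofReal (β / α) * volume N := hvolφ
        _ ≤ ENNReal.ofReal (β / α) * ENNReal.ofReal δr := by
            rw [hNvol]; exact mul_le_mul_right hbad.le _
        _ = ENNReal.ofReal (β / α * δr) := by
            rw [ENNReal.ofReal_mul (by positivity)]
    have hABlt : volume A + volume B' < volume (Set.Icc u v) := by
      have e1 : β / α * δr = β * β * (b - a) / 4 := by
        rw [hδr]; field_simp
      have e2 : δr + β * β * (b - a) / 4 = β * (b - a) / 4 := by
        have e3 : δr + β * β * (b - a) / 4 = (α + β) * (β * (b - a) / 4) := by rw [hδr]; ring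
        rw [e3, hαβ, one_mul]
      have hlt : δr + β / α * δr < v - u := by
        rw [e1]
        nlinarith
      calc volume A + volume B' ≤ ENNReal.ofReal δr + ENNReal.ofReal (β / α * δr) :=
            add_le_add hvolA hvolB
        _ = ENNReal.ofReal (δr + β / α * δr) := (ENNReal.ofReal_add hδrpos.le (by positivity)).symm
        _ < ENNReal.ofReal (v - u) := by
            rw [ENNReal.ofReal_lt_ofReal_iff (by linarith)]
            exact hlt
        _ = volume (Set.Icc u v) := (Real.volume_Icc).symm
    obtain ⟨x, hxuv, hxAB⟩ : ∃ x ∈ Set.Icc u v, x ∉ A ∪ B' := by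
      by_contra hcon
      push_neg at hcon
      have hss : Set.Icc u v ⊆ A ∪ B' := fun x hx => hcon x hx
      have h1 : volume (Set.Icc u v) ≤ volume (A ∪ B') := measure_mono hss
      have h2 : volume (A ∪ B') ≤ volume A + volume B' := measure_union_le A B'
      exact absurd (le_trans h1 h2) (not_le.2 hABlt)
    simp only [Set.mem_union, not_or] at hxAB
    have hxE : x ∈ E := by
      by_contra hxE
      exact hxAB.1 ⟨hxuv, hxE⟩
    have hyE : φ x ∈ E := by
      by_contra hyE
      exact hxAB.2 ⟨hxuv, hyE⟩
    have hrep : α * x + β * φ x = t := by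
      rw [hφ]; field_simp; ring
    have hineq := hac x (hsub hxuv) (φ x) (hymem x hxuv)
    rw [hrep] at hineq
    have hxC : h x ≤ C := hxE.2
    have hyC : h (φ x) ≤ C := hyE.2
    have hsum : α * C + β * C = C := by rw [← add_mul, hαβ, one_mul]
    linarith [hineq, hsum, mul_le_mul_of_nonneg_left hxC hα.le, mul_le_mul_of_nonneg_left hyC hβ.le]
  -- Step 3 : propagate the bound
  set K : ℝ := max (1 + C) (max ((1 + α * h a) / α) ((1 + α * h b) / α)) with hK
  have hK1 : 1 + C ≤ K := le_max_left _ _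
  have hKsplit : α * K + β * K = K := by rw [← add_mul, hαβ, one_mul]
  have hKa : 1 + α * h a + β * K ≤ K := by
    have h1 : (1 + α * h a) / α ≤ K := le_trans (le_max_left _ _) (le_max_right _ _)
    rw [div_le_iff₀ hα] at h1
    linarith [hKsplit, h1]
  have hKb : 1 + α * h b + β * K ≤ K := by
    have h1 : (1 + α * h b) / α ≤ K := le_trans (le_max_right _ _) (le_max_right _ _)
    rw [div_le_iff₀ hα] at h1
    linarith [hKsplit, h1]
  have hamem : a ∈ Set.Icc a b := ⟨le_rfl, hab.le⟩
  have hbmem : b ∈ Set.Icc a b := ⟨hab.le, le_rfl⟩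
  have hpow1 : ∀ n : ℕ, β ^ n ≤ 1 := fun n => pow_le_one₀ hβ.le hβ1.le
  have hpow0 : ∀ n : ℕ, 0 ≤ β ^ n := fun n => pow_nonneg hβ.le n
  have hcad : c ≤ α * a + β * d := by
    rw [hc, hd]
    nlinarith [ea, mul_nonneg hβba.le (by linarith : (0:ℝ) ≤ 1 - β)]
  have hdcb : α * b + β * c ≤ d := by
    rw [hc, hd]
    nlinarith [eb, mul_nonneg hβba.le (by linarith : (0:ℝ) ≤ 1 - β)]
  have claimL : ∀ n : ℕ, ∀ t, a + β ^ n * (c - a) ≤ t → t ≤ d → h t ≤ K := by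
    intro n
    induction n with
    | zero =>
      intro t ht1 ht2
      rw [pow_zero, one_mul] at ht1
      exact le_trans (key t ⟨by linarith, ht2⟩) hK1
    | succ n ih =>
      intro t ht1 ht2
      by_cases hcase : a + β ^ n * (c - a) ≤ t
      · exact ih t hcase ht2
      push_neg at hcase
      set y : ℝ := (t - α * a) / β with hy
      have epow : β ^ (n + 1) * (c - a) = β * (β ^ n * (c - a)) := by ring
      have hy1 : a + β ^ n * (c - a) ≤ y := by
        rw [hy, le_div_iff₀ hβ]
        linarith [ht1, ea, epow]
      have hcn : a + β ^ n * (c - a) ≤ c := by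
        linarith [mul_nonneg (sub_nonneg.2 (hpow1 n)) (by linarith : (0:ℝ) ≤ c - a)]
      have hy2 : y ≤ d := by
        rw [hy, div_le_iff₀ hβ]
        linarith [hcase, hcn, hcad]
      have hymem' : y ∈ Set.Icc a b := by
        constructor
        · have h0 : (0:ℝ) ≤ β ^ n * (c - a) :=
            mul_nonneg (hpow0 n) (by linarith)
          linarith [hy1]
        · linarith [hy2, hdb]
      have hrep : α * a + β * y = t := by rw [hy]; field_simp; ring
      have hineq := hac a hamem y hymem'
      rw [hrep] at hineq
      have hyK : h y ≤ K := ih y hy1 hy2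
      linarith [hineq, hKa, hKb, mul_le_mul_of_nonneg_left hyK hβ.le]
  have claimR : ∀ n : ℕ, ∀ t, c ≤ t → t ≤ b - β ^ n * (b - d) → h t ≤ K := by
    intro n
    induction n with
    | zero =>
      intro t ht1 ht2
      rw [pow_zero, one_mul] at ht2
      exact le_trans (key t ⟨ht1, by linarith⟩) hK1
    | succ n ih =>
      intro t ht1 ht2
      by_cases hcase : t ≤ b - β ^ n * (b - d)
      · exact ih t ht1 hcase
      push_neg at hcase
      set y : ℝ := (t - α * b) / β with hy
      have epow : β ^ (n + 1) * (b - d) = β * (β ^ n * (b - d)) := by ring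
      have hdn : d ≤ b - β ^ n * (b - d) := by
        linarith [mul_nonneg (sub_nonneg.2 (hpow1 n)) (by linarith : (0:ℝ) ≤ b - d)]
      have hy1 : c ≤ y := by
        rw [hy, le_div_iff₀ hβ]
        linarith [hcase, hdn, hdcb]
      have hy2 : y ≤ b - β ^ n * (b - d) := by
        rw [hy, div_le_iff₀ hβ]
        linarith [ht2, eb, epow]
      have hymem' : y ∈ Set.Icc a b := by
        constructor
        · linarith [hy1, hac']
        · have h0 : (0:ℝ) ≤ β ^ n * (b - d) := mul_nonneg (hpow0 n) (by linarith)
          linarith [hy2]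
      have hrep : α * b + β * y = t := by rw [hy]; field_simp; ring
      have hineq := hac b hbmem y hymem'
      rw [hrep] at hineq
      have hyK : h y ≤ K := ih y hy1 hy2
      linarith [hineq, hKa, hKb, mul_le_mul_of_nonneg_left hyK hβ.le]
  -- Final assembly
  refine ⟨max K (max (h a) (h b)), ?_⟩
  rintro x ⟨hxa, hxb⟩
  rcases eq_or_lt_of_le hxa with rfl | hxa'
  · exact le_trans (le_max_left _ _) (le_max_right _ _)
  rcases eq_or_lt_of_le hxb with rfl | hxb'
  · exact le_trans (le_max_right _ _) (le_max_right _ _)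
  by_cases hxd : x ≤ d
  · obtain ⟨n, hn⟩ := exists_pow_lt_of_lt_one
      (show (0:ℝ) < (x - a) / (c - a) by
        apply div_pos <;> linarith) hβ1
    rw [lt_div_iff₀ (by linarith : (0:ℝ) < c - a)] at hn
    refine le_trans (claimL n x (by linarith) hxd) (le_max_left _ _)
  · push_neg at hxd
    obtain ⟨n, hn⟩ := exists_pow_lt_of_lt_one
      (show (0:ℝ) < (b - x) / (b - d) by
        apply div_pos <;> linarith) hβ1
    rw [lt_div_iff₀ (by linarith : (0:ℝ) < b - d)] at hn
    refine le_trans (claimR n x (by linarith) (by linarith)) (le_max_left _ _)
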